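/- Let λ be a regular uncountable cardinal and ⟨c_α : α < λ⁺⟩ a sequence such that for each limit ordinal α < λ⁺, c_α is a club of α with otp(c_α) ≤ λ, and c_{γ+1} = {γ} for each γ. For each limit ordinal δ < λ⁺ define C_δ^0 = c_δ and C_δ^{n+1} = C_δ^n ∪ {α : there exists β ∈ nacc(C_δ^n) with sup(β ∩ C_δ^n) < α < β and α ∈ c_β}. Suppose A ⊆ S_λ^{λ⁺} and α < λ⁺ is a limit ordinal of uncountable cofinality such that A ∩ α is unbounded in α. Then there exists n < ω such that A ∩ nacc(C_α^n) is unbounded in α. -/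

import Mathlib

noncomputable section

/-- The order type of a set of ordinals (meaningful when `C` is small, i.e. bounded). -/
noncomputable def otp (C : Set Ordinal.{0}) : Ordinal.{0} := by
  classical
  exact if h : Small.{0} C then
    letI := h
    haveI : IsWellOrder (Shrink C)
        (fun x y => ((equivShrink C).symm x : Ordinal) < ((equivShrink C).symm y : Ordinal)) :=
      RelEmbedding.isWellOrder
        (⟨⟨fun x => ((equivShrink C).symm x : Ordinal),
            fun a b hab => (equivShrink C).symm.injective (Subtype.coe_injective hab)⟩,
          Iff.rfl⟩ :
          (fun x y : Shrink C =>
              ((equivShrink C).symm x : Ordinal) < ((equivShrink C).symm y : Ordinal)) ↪r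
            ((· < ·) : Ordinal → Ordinal → Prop))
    Ordinal.type
      (fun x y : Shrink C =>
        ((equivShrink C).symm x : Ordinal) < ((equivShrink C).symm y : Ordinal))
  else 0

/-- `C` is closed in `δ`: any supremum of a nonempty subset of `C` that is `< δ` lies in `C`. -/
def IsClosedIn (C : Set Ordinal.{0}) (δ : Ordinal.{0}) : Prop :=
  ∀ s ⊆ C, s.Nonempty → sSup s < δ → sSup s ∈ C

/-- `C` is a club (closed unbounded) subset of `δ`. -/
def IsClubIn (C : Set Ordinal.{0}) (δ : Ordinal.{0}) : Prop :=
  C ⊆ Set.Iio δ ∧ (∀ β < δ, ∃ γ ∈ C, β ≤ γ) ∧ IsClosedIn C δ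

/-- `S` is stationary in `δ`: it meets every club of `δ`. -/
def IsStationaryIn (S : Set Ordinal.{0}) (δ : Ordinal.{0}) : Prop :=
  ∀ C, IsClubIn C δ → (S ∩ C).Nonempty

/-- The accumulation points of `C` that belong to `C`. -/
def accSet (C : Set Ordinal.{0}) : Set Ordinal.{0} :=
  {β ∈ C | β = sSup (C ∩ Set.Iio β)}

/-- The non-accumulation points of `C`. -/
def naccSet (C : Set Ordinal.{0}) : Set Ordinal.{0} := C \ accSet C

/-- `S_κ^δ`: the set of ordinals below `δ` of cofinality `κ`. -/
def cofSet (κ : Cardinal.{0}) (δ : Ordinal.{0}) : Set Ordinal.{0} :=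
  {α | α < δ ∧ α.cof = κ}

/- ### Auxiliary lemmas -/

/-- The pulled-back order on `Shrink S`. -/
def srel (S : Set Ordinal.{0}) [Small.{0} S] : Shrink S → Shrink S → Prop :=
  fun x y => ((equivShrink S).symm x : Ordinal) < ((equivShrink S).symm y : Ordinal)

instance srel_wo (S : Set Ordinal.{0}) [Small.{0} S] : IsWellOrder (Shrink S) (srel S) :=
  RelEmbedding.isWellOrder
    (⟨⟨fun x => ((equivShrink S).symm x : Ordinal),
        fun a b hab => (equivShrink S).symm.injective (Subtype.coe_injective hab)⟩,
      Iff.rfl⟩ :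
      (srel S) ↪r ((· < ·) : Ordinal → Ordinal → Prop))

lemma otp_eq (S : Set Ordinal.{0}) [h : Small.{0} S] : otp S = Ordinal.type (srel S) := by
  rw [otp, dif_pos h]
  rfl

lemma otp_card (S : Set Ordinal.{0}) [Small.{0} S] :
    (otp S).card = Cardinal.mk (Shrink S) := by
  rw [otp_eq]; exact Ordinal.card_type _

lemma small_of_subset_Iio {S : Set Ordinal.{0}} {a : Ordinal} (h : S ⊆ Set.Iio a) :
    Small.{0} S :=
  Ordinal.bddAbove_iff_small.mp ⟨a, fun x hx => (h hx).le⟩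

lemma bddAbove_of_subset_Iio {S : Set Ordinal.{0}} {a : Ordinal} (h : S ⊆ Set.Iio a) :
    BddAbove S := ⟨a, fun x hx => (h hx).le⟩

/-- inclusion embedding -/
def srelIncl (S T : Set Ordinal.{0}) [Small.{0} S] [Small.{0} T] (h : S ⊆ T) :
    (srel S) ↪r (srel T) where
  toFun x := equivShrink T ⟨((equivShrink S).symm x : Ordinal), h ((equivShrink S).symm x).2⟩
  inj' a b hab := by
    have h1 := congrArg Subtype.val ((equivShrink T).injective hab)
    exact (equivShrink S).symm.injective (Subtype.ext h1)
  map_rel_iff' {a b} := by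
    change (((equivShrink T).symm (equivShrink T ⟨_, h ((equivShrink S).symm a).2⟩) : Ordinal) < ((equivShrink T).symm (equivShrink T ⟨_, h ((equivShrink S).symm b).2⟩) : Ordinal)) ↔ _
    simp only [Equiv.symm_apply_apply]
    exact Iff.rfl

lemma otp_mono {S T : Set Ordinal.{0}} [Small.{0} T] (h : S ⊆ T) : otp S ≤ otp T := by
  haveI : Small.{0} S := small_subset h
  rw [otp_eq, otp_eq]
  exact (srelIncl S T h).ordinal_type_le

lemma not_rel_self_emb {β : Type*} {r : β → β → Prop} [IsWellOrder β r]
    (f : r ↪r r) (b : β) : ¬ r (f b) b := by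
  refine (IsWellFounded.wf (r := r)).induction (C := fun b => ¬ r (f b) b) b ?_
  intro x IH hx
  exact IH (f x) hx (f.map_rel_iff.2 hx)

lemma otp_lt {D : Set Ordinal.{0}} [Small.{0} D] {γ δ : Ordinal} (hδ : δ ∈ D) (hγδ : γ ≤ δ) :
    otp (D ∩ Set.Iio γ) < otp D := by
  haveI : Small.{0} (D ∩ Set.Iio γ : Set Ordinal) := small_subset Set.inter_subset_left
  rcases lt_or_ge (otp (D ∩ Set.Iio γ)) (otp D) with h | h
  · exact h
  · exfalso
    rw [otp_eq, otp_eq, Ordinal.type_le_iff'] at h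
    obtain ⟨g⟩ := h
    set f := g.trans (srelIncl _ D Set.inter_subset_left) with hf
    have hb := not_rel_self_emb f (equivShrink D ⟨δ, hδ⟩)
    apply hb
    show ((equivShrink D).symm (f _) : Ordinal) < ((equivShrink D).symm (equivShrink D ⟨δ, hδ⟩) : Ordinal)
    rw [Equiv.symm_apply_apply]
    have h1 : ((equivShrink D).symm (f (equivShrink D ⟨δ, hδ⟩)) : Ordinal) < γ := by
      show (((equivShrink D).symm (srelIncl _ D Set.inter_subset_left (g (equivShrink D ⟨δ, hδ⟩)))) : Ordinal) < γ
      show (((equivShrink D).symm (equivShrink D ⟨_, _⟩)) : Ordinal) < γ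
      rw [Equiv.symm_apply_apply]
      exact ((equivShrink (D ∩ Set.Iio γ : Set Ordinal)).symm (g (equivShrink D ⟨δ, hδ⟩))).2.2
    exact lt_of_lt_of_le h1 hγδ

/-- key lemma: a set of order type `≤ λ` with an element `≥ γ`, where `cf γ = λ`,
is bounded below `γ`. -/
lemma keyL {lam : Cardinal.{0}} (hlam : Cardinal.aleph0 ≤ lam) {γ : Ordinal}
    (hγcof : γ.cof = lam) (D : Set Ordinal.{0}) [Small.{0} D]
    (hotp : otp D ≤ lam.ord) {δ : Ordinal} (hδ : δ ∈ D) (hγδ : γ ≤ δ) :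
    sSup (D ∩ Set.Iio γ) < γ := by
  set S : Set Ordinal := D ∩ Set.Iio γ with hS
  haveI : Small.{0} S := small_subset Set.inter_subset_left
  have hγ0 : 0 < γ := by
    rcases eq_zero_or_pos γ with h | h
    · exfalso
      rw [h, Ordinal.cof_zero] at hγcof
      exact (Cardinal.aleph0_pos.trans_le hlam).ne' hγcof.symm
    · exact h
  have hub : sSup S ≤ γ := csSup_le' (fun x hx => hx.2.le)
  rcases lt_or_eq_of_le hub with h | hsup
  · exact h
  · exfalso
    -- cof γ ≤ #(Shrink S)
    set f : Shrink S → Ordinal := fun x => ((equivShrink S).symm x : Ordinal) with hfdef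
    have hrange : Set.range f = S := by
      ext y
      constructor
      · rintro ⟨x, rfl⟩; exact ((equivShrink S).symm x).2
      · intro hy; exact ⟨equivShrink S ⟨y, hy⟩, by simp [hfdef]⟩
    have hiSup : iSup f = γ := by
      rw [iSup, hrange, hsup]
    have hcof : γ.cof ≤ Cardinal.mk (Shrink S) := by
      rw [← hiSup]
      apply Ordinal.cof_iSup_le
      intro i
      rw [hiSup]
      exact (((equivShrink S).symm i).2.2 : f i < γ)
    have hlt : (otp S).card < lam :=
      Cardinal.lt_ord.mp (lt_of_lt_of_le (otp_lt hδ hγδ) hotp)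
    rw [otp_card] at hlt
    rw [hγcof] at hcof
    exact absurd (hcof.trans_lt hlt) (lt_irrefl _)

theorem stmt_15
    (lam : Cardinal.{0}) (hlamreg : lam.IsRegular) (hlamunc : Cardinal.aleph0 < lam)
    (c : Ordinal → Set Ordinal)
    (hc : ∀ α < (Order.succ lam).ord, Order.IsSuccLimit α →
      IsClubIn (c α) α ∧ otp (c α) ≤ lam.ord)
    (hcsucc : ∀ γ : Ordinal, c (γ + 1) = {γ})
    (C : Ordinal → ℕ → Set Ordinal)
    (hC0 : ∀ δ, C δ 0 = c δ)
    (hCsucc : ∀ δ n, C δ (n + 1) = C δ n ∪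
      {α | ∃ β ∈ naccSet (C δ n), sSup (C δ n ∩ Set.Iio β) < α ∧ α < β ∧ α ∈ c β})
    (A : Set Ordinal) (hA : A ⊆ cofSet lam (Order.succ lam).ord)
    (α : Ordinal) (hα : α < (Order.succ lam).ord) (hαlim : Order.IsSuccLimit α)
    (hαcof : Cardinal.aleph0 < α.cof)
    (hunb : ∀ β < α, ∃ γ ∈ A, β ≤ γ ∧ γ < α) :
    ∃ n : ℕ, ∀ β < α, ∃ γ ∈ A ∩ naccSet (C α n), β ≤ γ ∧ γ < α := by
  classical
  obtain ⟨hcαclub, hcαotp⟩ := hc α hα hαlim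
  obtain ⟨hcαsub, hcαunb, _⟩ := hcαclub
  -- basic facts about the C α n
  have hCsub : ∀ n, C α n ⊆ Set.Iio α := by
    intro n
    induction n with
    | zero => rw [hC0]; exact hcαsub
    | succ n ih =>
      rw [hCsucc]
      rintro x (hx | ⟨β, hβ, _, hxβ, _⟩)
      · exact ih hx
      · exact lt_trans hxβ (ih hβ.1)
  have hCmono : ∀ n, C α n ⊆ C α (n + 1) := by
    intro n
    rw [hCsucc]; exact Set.subset_union_left
  have hC0sub : ∀ n, c α ⊆ C α n := by
    intro n
    induction n with
    | zero => rw [hC0]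
    | succ n ih => exact ih.trans (hCmono n)
  -- the main step machinery, for a fixed γ ∈ A below α
  have key : ∀ γ ∈ A, γ < α → ∃ m, γ ∈ naccSet (C α m) := by
    intro γ hγA hγα
    obtain ⟨hγlt, hγcof⟩ := hA hγA
    have hγ0 : 0 < γ := by
      rcases eq_zero_or_pos γ with h | h
      · exfalso
        have : lam = 0 := by rw [← hγcof, h, Ordinal.cof_zero]
        exact absurd this (Cardinal.aleph0_pos.trans hlamunc).ne'
      · exact h
    -- the main induction
    have main : ∀ e : Ordinal, ∀ n : ℕ,
        sInf {x | x ∈ C α n ∧ γ ≤ x} = e → sSup (C α n ∩ Set.Iio γ) < γ →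
        ∃ m, γ ∈ naccSet (C α m) := by
      intro e
      induction e using Ordinal.induction with
      | h e IH =>
        intro n hInf hInv
        have hTne : {x | x ∈ C α n ∧ γ ≤ x}.Nonempty := by
          obtain ⟨d, hd, hgd⟩ := hcαunb γ hγα
          exact ⟨d, hC0sub n hd, hgd⟩
        have heT : e ∈ {x | x ∈ C α n ∧ γ ≤ x} := hInf ▸ csInf_mem hTne
        obtain ⟨heC, hγe⟩ := heT
        rcases eq_or_lt_of_le hγe with rfl | hγe
        · -- γ ∈ C α n, and invariant says γ is not an accumulation point
          exact ⟨n, heC, fun hacc => absurd hacc.2 (by exact fun h => hInv.ne (h ▸ rfl))⟩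
        · -- step: e > γ
          have heα : e < α := hCsub n heC
          have heord : e < (Order.succ lam).ord := heα.trans hα
          have hmin : ∀ x ∈ C α n, x < e → x < γ := by
            intro x hx hxe
            by_contra hxγ
            push_neg at hxγ
            have : e ≤ x := hInf ▸ csInf_le (OrderBot.bddBelow _) ⟨hx, hxγ⟩
            exact absurd hxe (not_lt.mpr this)
          have hseteq : C α n ∩ Set.Iio e = C α n ∩ Set.Iio γ := by
            ext x
            constructor
            · rintro ⟨hx, hxe⟩; exact ⟨hx, hmin x hx hxe⟩
            · rintro ⟨hx, hxγ⟩; exact ⟨hx, hxγ.trans hγe⟩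
          have hsup_e : sSup (C α n ∩ Set.Iio e) < γ := by rw [hseteq]; exact hInv
          have henacc : e ∈ naccSet (C α n) := by
            refine ⟨heC, fun hacc => ?_⟩
            have := hacc.2
            rw [← this] at hsup_e
            exact absurd hγe (not_lt.mpr hsup_e.le)
          -- find δ ∈ c e with γ ≤ δ < e, and show c e ∩ Iio γ is bounded below γ
          have hstep : ∃ δ ∈ c e, γ ≤ δ ∧ δ < e ∧ sSup (c e ∩ Set.Iio γ) < γ := by
            rcases Ordinal.zero_or_succ_or_isSuccLimit e with h0 | ⟨η, hη⟩ | hlim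
            · exact absurd (h0 ▸ hγe) (by simp)
            · -- successor
              replace hη := hη.symm
              have hce : c e = {η} := by
                rw [hη, ← Ordinal.add_one_eq_succ]
                exact hcsucc η
              have hγη : γ ≤ η := Order.lt_succ_iff.mp (hη ▸ hγe)
              have hempty : c e ∩ Set.Iio γ = ∅ := by
                rw [hce]
                ext x
                simp only [Set.mem_inter_iff, Set.mem_singleton_iff, Set.mem_Iio,
                  Set.mem_empty_iff_false, iff_false, not_and]
                rintro rfl
                exact not_lt.mpr hγη
              refine ⟨η, by rw [hce]; rfl, hγη, by rw [hη]; exact Order.lt_succ_iff.mpr le_rfl, ?_⟩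
              rw [hempty]
              simpa using hγ0
            · -- limit
              obtain ⟨hclub, hotp⟩ := hc e heord hlim
              obtain ⟨hsub, hunb', _⟩ := hclub
              obtain ⟨δ, hδ, hγδ⟩ := hunb' γ hγe
              haveI : Small.{0} (c e) := small_of_subset_Iio hsub
              exact ⟨δ, hδ, hγδ, hsub hδ, keyL hlamunc.le hγcof (c e) hotp hδ hγδ⟩
          obtain ⟨δ, hδce, hγδ, hδe, hcebd⟩ := hstep
          have hδC : δ ∈ C α (n + 1) := by
            rw [hCsucc]
            right
            exact ⟨e, henacc, hsup_e.trans_le hγδ, hδe, hδce⟩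
          -- new invariant
          have hInv' : sSup (C α (n + 1) ∩ Set.Iio γ) < γ := by
            set b := max (sSup (C α n ∩ Set.Iio γ)) (sSup (c e ∩ Set.Iio γ)) with hb
            have hbγ : b < γ := max_lt hInv hcebd
            refine lt_of_le_of_lt (csSup_le' ?_) hbγ
            rintro x ⟨hx, hxγ⟩
            rw [hCsucc] at hx
            rcases hx with hx | ⟨β, hβnacc, hs, hxβ, hxc⟩
            · exact le_trans (le_csSup (bddAbove_of_subset_Iio (Set.inter_subset_right (s := C α n) (t := Set.Iio γ))) ⟨hx, hxγ⟩) (le_max_left _ _)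
            · have hβC : β ∈ C α n := hβnacc.1
              rcases lt_or_ge β γ with hβγ | hγβ
              · -- β < γ : x < β ≤ sSup (C α n ∩ Iio γ)
                refine le_trans hxβ.le (le_trans (le_csSup (bddAbove_of_subset_Iio (Set.inter_subset_right (s := C α n) (t := Set.Iio γ))) ⟨hβC, hβγ⟩) (le_max_left _ _))
              · have heβ : e ≤ β := hInf ▸ csInf_le (OrderBot.bddBelow _) ⟨hβC, hγβ⟩
                rcases eq_or_lt_of_le heβ with rfl | heβ'
                · -- β = e : x ∈ c e ∩ Iio γ
                  exact le_trans (le_csSup (bddAbove_of_subset_Iio Set.inter_subset_right) ⟨hxc, hxγ⟩) (le_max_right _ _)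
                · -- e < β : contradiction
                  exfalso
                  have : e ≤ sSup (C α n ∩ Set.Iio β) :=
                    le_csSup (bddAbove_of_subset_Iio (Set.inter_subset_right (s := C α n) (t := Set.Iio β))) ⟨heC, heβ'⟩
                  exact absurd (lt_of_le_of_lt this hs) (not_lt.mpr (le_trans hxγ.le hγe.le))
          -- new inf is smaller
          set e' := sInf {x | x ∈ C α (n + 1) ∧ γ ≤ x} with he'
          have he'lt : e' < e :=
            lt_of_le_of_lt (csInf_le (OrderBot.bddBelow _) ⟨hδC, hγδ⟩) hδe
          exact IH e' he'lt (n + 1) rfl hInv'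
    exact main (sInf {x | x ∈ C α 0 ∧ γ ≤ x}) 0 rfl (by
      rw [hC0]
      obtain ⟨d, hd, hgd⟩ := hcαunb γ hγα
      haveI : Small.{0} (c α) := small_of_subset_Iio hcαsub
      exact keyL hlamunc.le hγcof (c α) hcαotp hd hgd)
  -- main argument
  by_contra hcon
  push_neg at hcon
  choose β hβα hβ using hcon
  have hβsup : (⨆ n, β n) < α := by
    apply Ordinal.iSup_lt_ord _ hβα
    rwa [Cardinal.mk_denumerable]
  obtain ⟨γ, hγA, hγβ, hγα⟩ := hunb _ hβsup
  obtain ⟨m, hm⟩ := key γ hγA hγα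
  have := hβ m γ ⟨hγA, hm⟩ (le_trans (Ordinal.le_iSup β m) hγβ)
  exact absurd hγα (not_lt.mpr this)
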